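/- Let (Ω, 𝓕, μ) be a probability space and let X, Y : Ω → ℝ be random variables with X integrable. For each n ∈ ℕ let σ(αₙ ∘ Y) denote the σ-algebra on Ω generated by the map ω ↦ αₙ(Y(ω)) (the comap of the Borel σ-algebra), and let σ(Y) denote the σ-algebra generated by Y. Then the conditional expectations E[X | σ(αₙ ∘ Y)] converge to E[X | σ(Y)] as n → ∞, both μ-almost surely and in L¹(μ). -/

import Mathlib

open MeasureTheory Filter Topology

/-- The dyadic discretization `αₙ(y) = 2^(-n) * ⌈2^n * y⌉`. -/
noncomputable def dyadApprox (n : ℕ) (y : ℝ) : ℝ :=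
  (2 : ℝ) ^ (-(n : ℤ)) * (⌈(2 : ℝ) ^ n * y⌉ : ℝ)

lemma dyadApprox_measurable (n : ℕ) : Measurable (dyadApprox n) := by
  unfold dyadApprox
  have h1 : Measurable fun y : ℝ => (⌈(2 : ℝ) ^ n * y⌉ : ℤ) :=
    (measurable_id.const_mul ((2 : ℝ) ^ n)).ceil
  have h2 : Measurable fun y : ℝ => ((⌈(2 : ℝ) ^ n * y⌉ : ℤ) : ℝ) :=
    measurable_from_top.comp h1
  exact h2.const_mul _

lemma ceil_half_ceil (x : ℝ) : ⌈((⌈x⌉ : ℝ)) / 2⌉ = ⌈x / 2⌉ := by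
  apply le_antisymm
  · rw [Int.ceil_le]
    have h1 : x / 2 ≤ (⌈x / 2⌉ : ℝ) := Int.le_ceil _
    have h2 : (⌈x⌉ : ℤ) ≤ 2 * ⌈x / 2⌉ := by
      rw [Int.ceil_le]
      push_cast
      linarith
    have h3 : ((⌈x⌉ : ℤ) : ℝ) ≤ ((2 * ⌈x / 2⌉ : ℤ) : ℝ) := by exact_mod_cast h2
    push_cast at h3
    linarith
  · exact Int.ceil_mono (by linarith [Int.le_ceil x])

lemma dyadApprox_comp (n : ℕ) (y : ℝ) :
    dyadApprox n (dyadApprox (n + 1) y) = dyadApprox n y := by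
  unfold dyadApprox
  congr 1
  have hpow : (2 : ℝ) ^ n * (2 : ℝ) ^ (-((n + 1 : ℕ) : ℤ)) = 1 / 2 := by
    rw [← zpow_natCast (2 : ℝ) n, ← zpow_add₀ (two_ne_zero)]
    push_cast
    norm_num
  have : (2 : ℝ) ^ n * ((2 : ℝ) ^ (-((n + 1 : ℕ) : ℤ)) * (⌈(2 : ℝ) ^ (n + 1) * y⌉ : ℝ))
      = (⌈(2 : ℝ) ^ (n + 1) * y⌉ : ℝ) / 2 := by
    rw [← mul_assoc, hpow]; ring
  rw [this, ceil_half_ceil]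
  congr 1
  rw [pow_succ]
  ring

lemma dyadApprox_ge (n : ℕ) (y : ℝ) : y ≤ dyadApprox n y := by
  unfold dyadApprox
  have h1 : (2 : ℝ) ^ n * y ≤ (⌈(2 : ℝ) ^ n * y⌉ : ℝ) := Int.le_ceil _
  have h2 : (0 : ℝ) < (2 : ℝ) ^ (-(n : ℤ)) := by positivity
  calc y = (2 : ℝ) ^ (-(n : ℤ)) * ((2 : ℝ) ^ n * y) := by
          rw [← mul_assoc, ← zpow_natCast (2 : ℝ) n, ← zpow_add₀ (two_ne_zero)]
          simp
    _ ≤ _ := by exact mul_le_mul_of_nonneg_left h1 h2.le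

lemma dyadApprox_le (n : ℕ) (y : ℝ) : dyadApprox n y ≤ y + (2 : ℝ) ^ (-(n : ℤ)) := by
  unfold dyadApprox
  have h1 : (⌈(2 : ℝ) ^ n * y⌉ : ℝ) < (2 : ℝ) ^ n * y + 1 := Int.ceil_lt_add_one _
  have h2 : (0 : ℝ) < (2 : ℝ) ^ (-(n : ℤ)) := by positivity
  have hm : (2 : ℝ) ^ (-(n : ℤ)) * (2 : ℝ) ^ n = 1 := by
    rw [← zpow_natCast (2 : ℝ) n, ← zpow_add₀ (two_ne_zero)]
    simp
  have h3 : (2 : ℝ) ^ (-(n : ℤ)) * ((2 : ℝ) ^ n * y + 1) = y + (2 : ℝ) ^ (-(n : ℤ)) := by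
    rw [mul_add, ← mul_assoc, hm]
    ring
  calc (2 : ℝ) ^ (-(n : ℤ)) * (⌈(2 : ℝ) ^ n * y⌉ : ℝ)
      ≤ (2 : ℝ) ^ (-(n : ℤ)) * ((2 : ℝ) ^ n * y + 1) :=
        mul_le_mul_of_nonneg_left h1.le h2.le
    _ = y + (2 : ℝ) ^ (-(n : ℤ)) := h3

lemma dyadApprox_tendsto (y : ℝ) :
    Tendsto (fun n : ℕ => dyadApprox n y) atTop (𝓝 y) := by
  have hub : Tendsto (fun n : ℕ => y + (2 : ℝ) ^ (-(n : ℤ))) atTop (𝓝 (y + 0)) := by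
    apply tendsto_const_nhds.add
    have : ∀ n : ℕ, (2 : ℝ) ^ (-(n : ℤ)) = (1 / 2 : ℝ) ^ n := by
      intro n
      rw [zpow_neg, zpow_natCast]
      simp [one_div, inv_pow]
    simp only [this]
    exact tendsto_pow_atTop_nhds_zero_of_lt_one (by norm_num) (by norm_num)
  rw [add_zero] at hub
  exact tendsto_of_tendsto_of_tendsto_of_le_of_le tendsto_const_nhds hub
    (fun n => dyadApprox_ge n y) (fun n => dyadApprox_le n y)

/-- Conditional expectations given the discretized observations `αₙ ∘ Y` converge
to the conditional expectation given `Y`, both a.s. and in L¹. -/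
theorem condexp_dyadApprox_tendsto {Ω : Type*} [MeasurableSpace Ω] (μ : Measure Ω)
    [IsProbabilityMeasure μ] (X Y : Ω → ℝ) (hX : Integrable X μ) (hY : Measurable Y) :
    (∀ᵐ ω ∂μ, Tendsto
        (fun n : ℕ => (μ[X | MeasurableSpace.comap (fun ω' => dyadApprox n (Y ω')) (borel ℝ)]) ω)
        atTop (𝓝 ((μ[X | MeasurableSpace.comap Y (borel ℝ)]) ω))) ∧
    Tendsto (fun n : ℕ =>
        eLpNorm ((μ[X | MeasurableSpace.comap (fun ω' => dyadApprox n (Y ω')) (borel ℝ)]) -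
          (μ[X | MeasurableSpace.comap Y (borel ℝ)])) 1 μ) atTop (𝓝 0) := by
  have hb : borel ℝ = (inferInstance : MeasurableSpace ℝ) := rfl
  -- dyadApprox borel comap bounds
  have hd_meas : ∀ n, Measurable (fun ω => dyadApprox n (Y ω)) :=
    fun n => (dyadApprox_measurable n).comp hY
  have hcomap_le_Y : ∀ n, MeasurableSpace.comap (fun ω => dyadApprox n (Y ω)) (borel ℝ)
      ≤ MeasurableSpace.comap Y (borel ℝ) := by
    intro n
    have : (fun ω => dyadApprox n (Y ω)) = (dyadApprox n) ∘ Y := rfl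
    rw [this, ← MeasurableSpace.comap_comp]
    exact MeasurableSpace.comap_mono ((dyadApprox_measurable n).comap_le)
  have hmono : Monotone (fun n =>
      MeasurableSpace.comap (fun ω => dyadApprox n (Y ω)) (borel ℝ)) := by
    apply monotone_nat_of_le_succ
    intro n
    have heq : (fun ω => dyadApprox n (Y ω))
        = (dyadApprox n) ∘ (fun ω => dyadApprox (n + 1) (Y ω)) := by
      funext ω
      simp [Function.comp, dyadApprox_comp]
    rw [heq, ← MeasurableSpace.comap_comp]
    exact MeasurableSpace.comap_mono ((dyadApprox_measurable n).comap_le)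
  set ℱ : Filtration ℕ ‹MeasurableSpace Ω› :=
    { seq := fun n => MeasurableSpace.comap (fun ω => dyadApprox n (Y ω)) (borel ℝ)
      mono' := hmono
      le' := fun n => (hd_meas n).comap_le }
    with hFdef
  have hℱ : ∀ n, ℱ n = MeasurableSpace.comap (fun ω => dyadApprox n (Y ω)) (borel ℝ) :=
    fun n => rfl
  -- supremum contains σ(Y)
  have hmeasY : Measurable[⨆ n, ℱ n] Y := by
    refine @measurable_of_tendsto_metrizable Ω ℝ (⨆ n, (ℱ n : MeasurableSpace Ω)) _ _ _ _
      (fun n ω => dyadApprox n (Y ω)) Y ?_ ?_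
    · intro n
      have h1 : Measurable[ℱ n] (fun ω => dyadApprox n (Y ω)) :=
        measurable_iff_comap_le.2 le_rfl
      exact h1.mono (le_iSup (fun n => (ℱ n : MeasurableSpace Ω)) n) le_rfl
    · rw [tendsto_pi_nhds]
      intro ω
      exact dyadApprox_tendsto (Y ω)
  have hY_sup : MeasurableSpace.comap Y (borel ℝ) ≤ ⨆ n, ℱ n :=
    measurable_iff_comap_le.1 hmeasY
  have hYle : MeasurableSpace.comap Y (borel ℝ) ≤ ‹MeasurableSpace Ω› := hY.comap_le
  set g : Ω → ℝ := μ[X | MeasurableSpace.comap Y (borel ℝ)] with hg_def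
  have hg : Integrable g μ := integrable_condExp
  have hgm : StronglyMeasurable[⨆ n, ℱ n] g :=
    stronglyMeasurable_condExp.mono hY_sup
  have htower : ∀ n, μ[g | ℱ n] =ᵐ[μ] μ[X | ℱ n] := fun n =>
    condExp_condExp_of_le (hcomap_le_Y n) hYle
  have hae := hg.tendsto_ae_condExp hgm
  have hL1 := hg.tendsto_eLpNorm_condExp hgm
  constructor
  · have hall : ∀ᵐ ω ∂μ, ∀ n, (μ[g | ℱ n]) ω = (μ[X | ℱ n]) ω :=
      ae_all_iff.2 htower
    filter_upwards [hae, hall] with ω hω heq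
    exact hω.congr (fun n => heq n)
  · refine hL1.congr (fun n => ?_)
    exact eLpNorm_congr_ae ((htower n).sub (EventuallyEq.refl _ _))
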